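/- Let R be a ring and let 0 → A → G₁ → G₀ → M → 0 be an exact sequence of left R-modules with G₀ and G₁ Gorenstein projective. Then there exists an exact sequence 0 → A → H → Q → M → 0 of left R-modules with Q projective and H Gorenstein projective. -/

import Mathlib

universe u

open LinearMap

section GorensteinDefs

variable (S : Type u) [Ring S]

/-- A complete projective resolution: a doubly infinite exact sequence of projective
`S`-modules which stays exact after applying `Hom_S(-, Q)` for every projective module `Q`,
together with an identification of `G` with the image of the 0-th differential. -/
structure CompleteProjectiveResolution (G : Type u) [AddCommGroup G] [Module S G] where
  P : ℤ → Type u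
  [acg : ∀ i, AddCommGroup (P i)]
  [mod : ∀ i, Module S (P i)]
  projective : ∀ i, Module.Projective S (P i)
  d : ∀ i, P i →ₗ[S] P (i + 1)
  exact : ∀ i, LinearMap.range (d i) = LinearMap.ker (d (i + 1))
  homExact : ∀ (Q : Type u) [AddCommGroup Q] [Module S Q], Module.Projective S Q →
      ∀ i (f : P (i + 1) →ₗ[S] Q), f.comp (d i) = 0 →
        ∃ g : P (i + 1 + 1) →ₗ[S] Q, g.comp (d (i + 1)) = f
  equiv : Nonempty (G ≃ₗ[S] LinearMap.range (d 0))

attribute [instance] CompleteProjectiveResolution.acg CompleteProjectiveResolution.mod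

/-- A module is Gorenstein projective if it admits a complete projective resolution. -/
def IsGorensteinProjective (G : Type u) [AddCommGroup G] [Module S G] : Prop :=
  Nonempty (CompleteProjectiveResolution S G)

/-- An exact sequence `0 → G n → G (n-1) → ⋯ → G 1 → G 0 → M → 0` of `S`-modules,
encoded as an `ℕ`-indexed exact sequence whose entries in degrees `> n` are zero. -/
structure FiniteExactSequenceTo (M : Type u) [AddCommGroup M] [Module S M] (n : ℕ) where
  G : ℕ → Type u
  [acg : ∀ i, AddCommGroup (G i)]
  [mod : ∀ i, Module S (G i)]
  d : ∀ i, G (i + 1) →ₗ[S] G i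
  aug : G 0 →ₗ[S] M
  aug_surjective : Function.Surjective aug
  exact_aug : LinearMap.range (d 0) = LinearMap.ker aug
  exact : ∀ i, LinearMap.range (d (i + 1)) = LinearMap.ker (d i)
  trivial_of_gt : ∀ i, n < i → Subsingleton (G i)

attribute [instance] FiniteExactSequenceTo.acg FiniteExactSequenceTo.mod

/-- `M` admits an exact sequence `0 → G n → ⋯ → G 0 → M → 0` with all `G i`
Gorenstein projective. -/
def GorensteinProjectiveDimensionLE (M : Type u) [AddCommGroup M] [Module S M] (n : ℕ) : Prop :=
  ∃ E : FiniteExactSequenceTo S M n, ∀ i ≤ n, IsGorensteinProjective S (E.G i)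

/-- The Gorenstein projective dimension `Gpd_S(M)`, as an element of `ℕ∞`. -/
noncomputable def gpd (M : Type u) [AddCommGroup M] [Module S M] : ℕ∞ :=
  sInf {k : ℕ∞ | ∃ n : ℕ, k = n ∧ GorensteinProjectiveDimensionLE S M n}

/-- `M` admits an exact sequence `0 → P n → ⋯ → P 0 → M → 0` with all `P i` projective. -/
def ProjectiveDimensionLE (M : Type u) [AddCommGroup M] [Module S M] (n : ℕ) : Prop :=
  ∃ E : FiniteExactSequenceTo S M n, ∀ i ≤ n, Module.Projective S (E.G i)

/-- The projective dimension `pd_S(M)`, as an element of `ℕ∞`. -/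
noncomputable def pd (M : Type u) [AddCommGroup M] [Module S M] : ℕ∞ :=
  sInf {k : ℕ∞ | ∃ n : ℕ, k = n ∧ ProjectiveDimensionLE S M n}

end GorensteinDefs

namespace GPAux

variable (S : Type u) [Ring S]

/-- Factor a linear map through a surjection whose kernel it kills. -/
theorem exists_comp_eq {M N Q : Type u} [AddCommGroup M] [Module S M] [AddCommGroup N]
    [Module S N] [AddCommGroup Q] [Module S Q]
    (f : M →ₗ[S] N) (hf : Function.Surjective f) (g : M →ₗ[S] Q) (hle : ker f ≤ ker g) :
    ∃ h : N →ₗ[S] Q, h.comp f = g := by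
  refine ⟨(Submodule.liftQ (ker f) g hle).comp (f.quotKerEquivOfSurjective hf).symm.toLinearMap, ?_⟩
  ext x
  have h1 : (f.quotKerEquivOfSurjective hf) (Submodule.Quotient.mk x) = f x := by
    simp [LinearMap.quotKerEquivOfSurjective, LinearMap.quotKerEquivRange]
  have h2 : (f.quotKerEquivOfSurjective hf).symm (f x) = Submodule.Quotient.mk x := by
    rw [← h1, LinearEquiv.symm_apply_apply]
  simp [h2]

/-- A short exact sequence `0 → B → P → A → 0` with `P` (typically projective) such that every
map from `B` to a projective module extends to `P`. -/
structure ProjLink (B P A : Type u) [AddCommGroup B] [Module S B] [AddCommGroup P] [Module S P]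
    [AddCommGroup A] [Module S A] : Type (u + 1) where
  inc : B →ₗ[S] P
  sur : P →ₗ[S] A
  inc_inj : Function.Injective inc
  sur_surj : Function.Surjective sur
  exact : LinearMap.range inc = LinearMap.ker sur
  ext : ∀ (Q : Type u) [AddCommGroup Q] [Module S Q], Module.Projective S Q →
    ∀ φ : B →ₗ[S] Q, ∃ ψ : P →ₗ[S] Q, ψ.comp inc = φ

variable {S}

/-- Transport the target of a `ProjLink` along a linear equivalence. -/
noncomputable def ProjLink.congA {B P A A₂ : Type u} [AddCommGroup B] [Module S B]
    [AddCommGroup P] [Module S P] [AddCommGroup A] [Module S A] [AddCommGroup A₂] [Module S A₂]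
    (l : ProjLink S B P A) (e : A ≃ₗ[S] A₂) : ProjLink S B P A₂ where
  inc := l.inc
  sur := e.toLinearMap.comp l.sur
  inc_inj := l.inc_inj
  sur_surj := e.surjective.comp l.sur_surj
  exact := by
    rw [l.exact, LinearMap.ker_comp, LinearEquiv.ker, Submodule.comap_bot]
  ext := l.ext

/-- `Ext¹(A'', proj) = 0`, witnessed by some projective presentation. -/
def CoExt (A'' : Type u) [AddCommGroup A''] [Module S A''] : Prop :=
  ∃ (K P : Type u) (_ : AddCommGroup K) (_ : Module S K) (_ : AddCommGroup P) (_ : Module S P),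
    Module.Projective S P ∧ Nonempty (ProjLink S K P A'')

/-- Key extension lemma: if `0 → A' → Y → A'' → 0` is exact and `Ext¹(A'', Q) = 0` for the
projective `Q`, then every map `A' → Q` extends to `Y`. -/
theorem extend_of_coext {A' Y A'' Q : Type u} [AddCommGroup A'] [Module S A']
    [AddCommGroup Y] [Module S Y] [AddCommGroup A''] [Module S A''] [AddCommGroup Q] [Module S Q]
    (a : A' →ₗ[S] Y) (b : Y →ₗ[S] A'') (ha : Function.Injective a) (hb : Function.Surjective b)
    (hab : LinearMap.range a = LinearMap.ker b)
    (hco : CoExt (S := S) A'') (hQ : Module.Projective S Q) (φ : A' →ₗ[S] Q) :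
    ∃ Φ : Y →ₗ[S] Q, Φ.comp a = φ := by
  obtain ⟨K, PK, _, _, _, _, hPK, ⟨l⟩⟩ := hco
  -- lift l.sur : PK → A'' through b by projectivity of PK
  obtain ⟨χ, hχ⟩ := Module.projective_lifting_property (R := S) b l.sur hb
  -- χ ∘ l.inc lands in range a = ker b
  have hmem : ∀ k : K, χ (l.inc k) ∈ LinearMap.range a := by
    intro k
    rw [hab, LinearMap.mem_ker]
    have : b (χ (l.inc k)) = l.sur (l.inc k) := by
      have := congrArg (fun (m : PK →ₗ[S] A'') => m (l.inc k)) hχ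
      simpa using this
    rw [this]
    have : l.inc k ∈ LinearMap.ker l.sur := by rw [← l.exact]; exact ⟨k, rfl⟩
    exact this
  -- δ : K → A' with a ∘ δ = χ ∘ l.inc
  set δ : K →ₗ[S] A' :=
    (LinearEquiv.ofInjective a ha).symm.toLinearMap.comp
      ((χ.comp l.inc).codRestrict (LinearMap.range a) hmem) with hδ
  have haδ : ∀ k, a (δ k) = χ (l.inc k) := by
    intro k
    have : a ((LinearEquiv.ofInjective a ha).symm
        (((χ.comp l.inc).codRestrict (LinearMap.range a) hmem) k)) =
        (((χ.comp l.inc).codRestrict (LinearMap.range a) hmem) k : Y) := by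
      rw [← LinearEquiv.ofInjective_apply (f := a) (h := ha), LinearEquiv.apply_symm_apply]
    simpa [hδ] using this
  -- extend φ ∘ δ along l.inc
  obtain ⟨e, he⟩ := l.ext Q hQ (φ.comp δ)
  -- F : A' × PK → Y surjective
  set F : (A' × PK) →ₗ[S] Y := a.comp (LinearMap.fst S A' PK) + χ.comp (LinearMap.snd S A' PK)
    with hF
  have hFs : Function.Surjective F := by
    intro y
    obtain ⟨w, hw⟩ := l.sur_surj (b y)
    have : y - χ w ∈ LinearMap.range a := by
      rw [hab, LinearMap.mem_ker, map_sub]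
      have : b (χ w) = l.sur w := by
        have := congrArg (fun (m : PK →ₗ[S] A'') => m w) hχ
        simpa using this
      rw [this, hw, sub_self]
    obtain ⟨z, hz⟩ := this
    exact ⟨(z, w), by simp [hF, hz]⟩
  set G : (A' × PK) →ₗ[S] Q := φ.comp (LinearMap.fst S A' PK) + e.comp (LinearMap.snd S A' PK)
    with hG
  have hle : ker F ≤ ker G := by
    rintro ⟨z, w⟩ hzw
    simp only [LinearMap.mem_ker, hF, LinearMap.add_apply, LinearMap.comp_apply,
      LinearMap.fst_apply, LinearMap.snd_apply] at hzw
    -- b (χ w) = 0 hence w ∈ range l.inc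
    have hbw : l.sur w = 0 := by
      have hb0 : b (a z + χ w) = 0 := by rw [hzw]; simp
      have hba : b (a z) = 0 := by
        have : a z ∈ LinearMap.ker b := by rw [← hab]; exact ⟨z, rfl⟩
        exact this
      have : b (χ w) = l.sur w := by
        have := congrArg (fun (m : PK →ₗ[S] A'') => m w) hχ
        simpa using this
      rw [map_add, hba, zero_add, this] at hb0
      exact hb0
    have : w ∈ LinearMap.range l.inc := by rw [l.exact]; exact hbw
    obtain ⟨k, hk⟩ := this
    have hz0 : z = - δ k := by
      have : a (z + δ k) = 0 := by
        rw [map_add, haδ, hk, hzw]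
      have h0 : z + δ k = 0 := ha (by simpa using this)
      exact eq_neg_of_add_eq_zero_left h0
    simp only [LinearMap.mem_ker, hG, LinearMap.add_apply, LinearMap.comp_apply,
      LinearMap.fst_apply, LinearMap.snd_apply, hz0, ← hk]
    have hek : e (l.inc k) = φ (δ k) := by
      have := congrArg (fun (m : K →ₗ[S] Q) => m k) he
      simpa using this
    rw [hek]
    simp
  obtain ⟨Φ, hΦ⟩ := exists_comp_eq (S := S) F hFs G hle
  refine ⟨Φ, ?_⟩
  ext z
  have : Φ (F (z, 0)) = G (z, 0) := by
    have := congrArg (fun (m : (A' × PK) →ₗ[S] Q) => m (z, 0)) hΦ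
    simpa using this
  simpa [hF, hG] using this

end GPAux

namespace GPAux
variable {S : Type u} [Ring S]

/-- Left half data: exact sequences `0 → Z (j+1) → R j → Z j → 0` with `R j` projective. -/
structure LeftRes (S : Type u) [Ring S] (X : Type u) [AddCommGroup X] [Module S X] :
    Type (u + 1) where
  Z : ℕ → Type u
  R : ℕ → Type u
  [zacg : ∀ j, AddCommGroup (Z j)]
  [zmod : ∀ j, Module S (Z j)]
  [racg : ∀ j, AddCommGroup (R j)]
  [rmod : ∀ j, Module S (R j)]
  projR : ∀ j, Module.Projective S (R j)
  e : X ≃ₗ[S] Z 0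
  link : ∀ j, ProjLink S (Z (j + 1)) (R j) (Z j)

attribute [instance] LeftRes.zacg LeftRes.zmod LeftRes.racg LeftRes.rmod

/-- Right half data: exact sequences `0 → C i → Q i → C (i+1) → 0` with `Q i` projective. -/
structure RightRes (S : Type u) [Ring S] (X : Type u) [AddCommGroup X] [Module S X] :
    Type (u + 1) where
  C : ℕ → Type u
  Q : ℕ → Type u
  [cacg : ∀ i, AddCommGroup (C i)]
  [cmod : ∀ i, Module S (C i)]
  [qacg : ∀ i, AddCommGroup (Q i)]
  [qmod : ∀ i, Module S (Q i)]
  projQ : ∀ i, Module.Projective S (Q i)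
  e : X ≃ₗ[S] C 0
  link : ∀ i, ProjLink S (C i) (Q i) (C (i + 1))

attribute [instance] RightRes.cacg RightRes.cmod RightRes.qacg RightRes.qmod

structure GPData (S : Type u) [Ring S] (X : Type u) [AddCommGroup X] [Module S X] :
    Type (u + 1) where
  left : LeftRes S X
  right : RightRes S X

/-- Transport along an equivalence. -/
noncomputable def LeftRes.congr {X X₂ : Type u} [AddCommGroup X] [Module S X]
    [AddCommGroup X₂] [Module S X₂] (L : LeftRes S X) (eq : X ≃ₗ[S] X₂) : LeftRes S X₂ :=
  { L with e := eq.symm ≪≫ₗ L.e }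

noncomputable def RightRes.congr {X X₂ : Type u} [AddCommGroup X] [Module S X]
    [AddCommGroup X₂] [Module S X₂] (R : RightRes S X) (eq : X ≃ₗ[S] X₂) : RightRes S X₂ :=
  { R with e := eq.symm ≪≫ₗ R.e }

noncomputable def GPData.congr {X X₂ : Type u} [AddCommGroup X] [Module S X]
    [AddCommGroup X₂] [Module S X₂] (D : GPData S X) (eq : X ≃ₗ[S] X₂) : GPData S X₂ :=
  ⟨D.left.congr eq, D.right.congr eq⟩

section Extract

variable {G : Type u} [AddCommGroup G] [Module S G] (res : CompleteProjectiveResolution S G)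

/-- The basic link extracted from a complete resolution, between two consecutive images. -/
noncomputable def _root_.CompleteProjectiveResolution.linkAt' (a0 : ℤ) :
    ProjLink S (LinearMap.range (res.d (a0 + 1))) (res.P (a0 + 1 + 1))
      (LinearMap.range (res.d (a0 + 1 + 1))) :=
  { inc := (LinearMap.range (res.d (a0 + 1))).subtype
    sur := (res.d (a0 + 1 + 1)).rangeRestrict
    inc_inj := Subtype.val_injective
    sur_surj := LinearMap.surjective_rangeRestrict _
    exact := by
      rw [Submodule.range_subtype, LinearMap.ker_rangeRestrict, res.exact (a0 + 1)]
    ext := by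
      intro Q _ _ hQ φ
      set f : res.P (a0 + 1) →ₗ[S] Q := φ.comp (res.d (a0 + 1)).rangeRestrict with hf
      have hf0 : f.comp (res.d a0) = 0 := by
        ext x
        have hmem : res.d a0 x ∈ LinearMap.ker (res.d (a0 + 1)) := by
          rw [← res.exact a0]; exact ⟨x, rfl⟩
        have : (res.d (a0 + 1)).rangeRestrict (res.d a0 x) = 0 := by
          apply Subtype.ext
          simpa using hmem
        simp [hf, this]
      obtain ⟨g, hg⟩ := res.homExact Q hQ a0 f hf0
      refine ⟨g, ?_⟩
      ext ⟨y, hy⟩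
      obtain ⟨x, rfl⟩ := hy
      have := congrArg (fun (m : res.P (a0 + 1) →ₗ[S] Q) => m x) hg
      simp [hf] at this
      exact this }

noncomputable def _root_.CompleteProjectiveResolution.linkAt (a b : ℤ) (h : a + 1 = b) :
    ProjLink S (LinearMap.range (res.d a)) (res.P b) (LinearMap.range (res.d b)) := by
  subst h
  have h2 : a - 1 + 1 = a := by omega
  rw [← h2]
  exact res.linkAt' (a - 1)

/-- Index sequence going left. -/
def zidx (k : ℤ) : ℕ → ℤ
  | 0 => k
  | j + 1 => zidx k j - 1

/-- Index sequence going right. -/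
def ridx (k : ℤ) : ℕ → ℤ
  | 0 => k
  | n + 1 => ridx k n + 1

/-- The left resolution of an image of the resolution. -/
noncomputable def _root_.CompleteProjectiveResolution.leftResAt (k : ℤ) :
    LeftRes S (LinearMap.range (res.d k)) where
  Z := fun j => LinearMap.range (res.d (zidx k j))
  R := fun j => res.P (zidx k j)
  projR := fun j => res.projective _
  e := LinearEquiv.refl _ _
  link := fun j => res.linkAt (zidx k (j + 1)) (zidx k j) (by simp [zidx])

/-- The right resolution of an image of the resolution. -/
noncomputable def _root_.CompleteProjectiveResolution.rightResAt (k : ℤ) :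
    RightRes S (LinearMap.range (res.d k)) where
  C := fun n => LinearMap.range (res.d (ridx k n))
  Q := fun n => res.P (ridx k (n + 1))
  projQ := fun n => res.projective _
  e := LinearEquiv.refl _ _
  link := fun n => res.linkAt (ridx k n) (ridx k (n + 1)) rfl

noncomputable def _root_.CompleteProjectiveResolution.gpDataAt (k : ℤ) :
    GPData S (LinearMap.range (res.d k)) :=
  ⟨res.leftResAt k, res.rightResAt k⟩

end Extract
end GPAux

namespace GPAux
variable {S : Type u} [Ring S]

/-- A short exact sequence `0 → A → Y → B → 0`. -/
structure MidSES (S : Type u) [Ring S] (A B : Type u) [AddCommGroup A] [Module S A]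
    [AddCommGroup B] [Module S B] : Type (u + 1) where
  Y : Type u
  [yacg : AddCommGroup Y]
  [ymod : Module S Y]
  a : A →ₗ[S] Y
  b : Y →ₗ[S] B
  ha : Function.Injective a
  hb : Function.Surjective b
  hab : LinearMap.range a = LinearMap.ker b

attribute [instance] MidSES.yacg MidSES.ymod

section Steps

variable {A' B' A'' B'' P' P'' : Type u}
  [AddCommGroup A'] [Module S A'] [AddCommGroup B'] [Module S B']
  [AddCommGroup A''] [Module S A''] [AddCommGroup B''] [Module S B'']
  [AddCommGroup P'] [Module S P'] [AddCommGroup P''] [Module S P'']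

/-- Horseshoe step on the left: given `0 → A' → Y → A'' → 0` and links
`0 → B' → P' → A' → 0`, `0 → B'' → P'' → A'' → 0` with `P''` projective, produce
`0 → Y₁ → P' × P'' → Y → 0` with `0 → B' → Y₁ → B'' → 0`. -/
noncomputable def leftStep (m : MidSES S A' A'') (l' : ProjLink S B' P' A')
    (l'' : ProjLink S B'' P'' A'') (hP'' : Module.Projective S P'') :
    (next : MidSES S B' B'') ×' ProjLink S next.Y (P' × P'') m.Y := by
  have hex := Module.projective_lifting_property (R := S) m.b l''.sur m.hb
  set lift := hex.choose with hliftdef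
  have hlift : m.b ∘ₗ lift = l''.sur := hex.choose_spec
  set π : (P' × P'') →ₗ[S] m.Y :=
    (m.a.comp l'.sur).comp (LinearMap.fst S P' P'') + lift.comp (LinearMap.snd S P' P'')
    with hπdef
  have hπ : ∀ x : P' × P'', π x = m.a (l'.sur x.1) + lift x.2 := fun x => rfl
  have hblift : ∀ w : P'', m.b (lift w) = l''.sur w := by
    intro w
    have := congrArg (fun (f : P'' →ₗ[S] A'') => f w) hlift
    simpa using this
  have hπsurj : Function.Surjective π := by
    intro y
    obtain ⟨w'', hw''⟩ := l''.sur_surj (m.b y)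
    have : y - lift w'' ∈ LinearMap.range m.a := by
      rw [m.hab, LinearMap.mem_ker, map_sub, hblift, hw'', sub_self]
    obtain ⟨z, hz⟩ := this
    obtain ⟨w', hw'⟩ := l'.sur_surj z
    exact ⟨(w', w''), by rw [hπ]; simp [hw', hz]⟩
  -- the new middle module
  -- maps in and out of ker π
  have hker_mem : ∀ z : B', ((l'.inc z, 0) : P' × P'') ∈ LinearMap.ker π := by
    intro z
    have : l'.sur (l'.inc z) = 0 := by
      have : l'.inc z ∈ LinearMap.ker l'.sur := by rw [← l'.exact]; exact ⟨z, rfl⟩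
      exact this
    simp [LinearMap.mem_ker, hπ, this]
  set na : B' →ₗ[S] LinearMap.ker π :=
    LinearMap.codRestrict _ (LinearMap.prod l'.inc 0) hker_mem with hnadef
  have hna : ∀ z, ((na z : P' × P'')) = (l'.inc z, 0) := fun z => rfl
  -- second projection of ker π lands in range l''.inc
  have hsnd_mem : ∀ x : LinearMap.ker π, (x : P' × P'').2 ∈ LinearMap.range l''.inc := by
    rintro ⟨⟨w', w''⟩, hx⟩
    rw [l''.exact, LinearMap.mem_ker]
    have hx0 : m.a (l'.sur w') + lift w'' = 0 := hx
    have : m.b (m.a (l'.sur w') + lift w'') = 0 := by rw [hx0]; simp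
    have hba : m.b (m.a (l'.sur w')) = 0 := by
      have : m.a (l'.sur w') ∈ LinearMap.ker m.b := by rw [← m.hab]; exact ⟨_, rfl⟩
      exact this
    rw [map_add, hba, zero_add, hblift] at this
    exact this
  set nb : LinearMap.ker π →ₗ[S] B'' :=
    (LinearEquiv.ofInjective l''.inc l''.inc_inj).symm.toLinearMap.comp
      (LinearMap.codRestrict _ ((LinearMap.snd S P' P'').comp (LinearMap.ker π).subtype)
        hsnd_mem) with hnbdef
  have hnb : ∀ x : LinearMap.ker π, l''.inc (nb x) = (x : P' × P'').2 := by
    intro x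
    show l''.inc ((LinearEquiv.ofInjective l''.inc l''.inc_inj).symm ⟨(x : P' × P'').2, _⟩) = _
    rw [← LinearEquiv.ofInjective_apply (f := l''.inc) (h := l''.inc_inj),
      LinearEquiv.apply_symm_apply]
  have hna_inj : Function.Injective na := by
    intro z₁ z₂ h
    have := congrArg (fun x : LinearMap.ker π => (x : P' × P'').1) h
    exact l'.inc_inj this
  have hnb_surj : Function.Surjective nb := by
    intro z''
    have h1 : m.b (lift (l''.inc z'')) = 0 := by
      rw [hblift]
      have : l''.inc z'' ∈ LinearMap.ker l''.sur := by rw [← l''.exact]; exact ⟨z'', rfl⟩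
      exact this
    have : lift (l''.inc z'') ∈ LinearMap.range m.a := by rw [m.hab]; exact h1
    obtain ⟨z, hz⟩ := this
    obtain ⟨w', hw'⟩ := l'.sur_surj z
    have hmem : ((-w', l''.inc z'') : P' × P'') ∈ LinearMap.ker π := by
      simp only [LinearMap.mem_ker, hπ, map_neg, hw', hz]
      abel
    refine ⟨⟨_, hmem⟩, ?_⟩
    apply l''.inc_inj
    rw [hnb]
  have hnab : LinearMap.range na = LinearMap.ker nb := by
    apply le_antisymm
    · rintro x ⟨z, rfl⟩
      apply l''.inc_inj
      rw [hnb, map_zero, hna]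
    · rintro x hx
      have h2 : (x : P' × P'').2 = 0 := by rw [← hnb x, hx, map_zero]
      have h1 : π x = 0 := x.2
      rw [hπ] at h1
      rw [h2, map_zero, add_zero] at h1
      have : l'.sur (x : P' × P'').1 = 0 := m.ha (by simpa using h1)
      have : (x : P' × P'').1 ∈ LinearMap.range l'.inc := by rw [l'.exact]; exact this
      obtain ⟨z, hz⟩ := this
      refine ⟨z, ?_⟩
      apply Subtype.ext
      rw [hna]
      exact Prod.ext hz h2.symm
  refine ⟨⟨LinearMap.ker π, na, nb, hna_inj, hnb_surj, hnab⟩,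
    { inc := (LinearMap.ker π).subtype
      sur := π
      inc_inj := Subtype.val_injective
      sur_surj := hπsurj
      exact := by rw [Submodule.range_subtype]
      ext := ?_ }⟩
  intro Q _ _ hQ φ
  -- extend φ from ker π to P' × P''
  obtain ⟨α, hα⟩ := l'.ext Q hQ (φ.comp na)
  have hαz : ∀ z, α (l'.inc z) = φ (na z) := by
    intro z
    have := congrArg (fun (f : B' →ₗ[S] Q) => f z) hα
    simpa using this
  set ψ : LinearMap.ker π →ₗ[S] Q :=
    φ - (α.comp ((LinearMap.fst S P' P'').comp (LinearMap.ker π).subtype)) with hψdef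
  have hψna : ∀ z, ψ (na z) = 0 := by
    intro z
    simp only [hψdef, LinearMap.sub_apply, LinearMap.comp_apply, Submodule.coe_subtype,
      LinearMap.fst_apply]
    rw [hna]
    simp [hαz]
  have hψker : LinearMap.ker nb ≤ LinearMap.ker ψ := by
    intro x hx
    rw [← hnab] at hx
    obtain ⟨z, rfl⟩ := hx
    exact hψna z
  obtain ⟨βb, hβb⟩ := exists_comp_eq (S := S) nb hnb_surj ψ hψker
  obtain ⟨β, hβ⟩ := l''.ext Q hQ βb
  refine ⟨α.comp (LinearMap.fst S P' P'') + β.comp (LinearMap.snd S P' P''), ?_⟩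
  ext x
  have hβx : β ((x : P' × P'').2) = βb (nb x) := by
    rw [← hnb x]
    have := congrArg (fun (f : B'' →ₗ[S] Q) => f (nb x)) hβ
    simpa using this
  have hβbx : βb (nb x) = ψ x := by
    have := congrArg (fun (f : LinearMap.ker π →ₗ[S] Q) => f x) hβb
    simpa using this
  simp only [LinearMap.comp_apply, LinearMap.add_apply, Submodule.coe_subtype,
    LinearMap.fst_apply, LinearMap.snd_apply]
  rw [hβx, hβbx]
  simp [hψdef]

end Steps
end GPAux

namespace GPAux
section Steps2
variable {S : Type u} [Ring S]
variable {A' B' A'' B'' P' P'' : Type u}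
  [AddCommGroup A'] [Module S A'] [AddCommGroup B'] [Module S B']
  [AddCommGroup A''] [Module S A''] [AddCommGroup B''] [Module S B'']
  [AddCommGroup P'] [Module S P'] [AddCommGroup P''] [Module S P'']

/-- Horseshoe step on the right: given `0 → A' → Y → A'' → 0`, links
`0 → A' → P' → B' → 0` and `0 → A'' → P'' → B'' → 0` with `P'` projective and
`Ext¹(A'', proj) = 0`, produce `0 → Y → P' × P'' → Y₁ → 0` with `0 → B' → Y₁ → B'' → 0`. -/
noncomputable def rightStep (m : MidSES S A' A'') (l' : ProjLink S A' P' B')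
    (l'' : ProjLink S A'' P'' B'') (hP' : Module.Projective S P')
    (hco : CoExt (S := S) A'') :
    (next : MidSES S B' B'') ×' ProjLink S m.Y (P' × P'') next.Y := by
  have hexΦ := extend_of_coext m.a m.b m.ha m.hb m.hab hco hP' l'.inc
  set Φ := hexΦ.choose with hΦdef
  have hΦ : Φ ∘ₗ m.a = l'.inc := hexΦ.choose_spec
  have hΦa : ∀ c, Φ (m.a c) = l'.inc c := by
    intro c
    have := congrArg (fun (f : A' →ₗ[S] P') => f c) hΦ
    simpa using this
  set u : m.Y →ₗ[S] P' × P'' := Φ.prod (l''.inc.comp m.b) with hudef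
  have hu : ∀ y, u y = (Φ y, l''.inc (m.b y)) := fun y => rfl
  have hu_inj : Function.Injective u := by
    intro y₁ y₂ h
    have h2 : l''.inc (m.b y₁) = l''.inc (m.b y₂) := congrArg Prod.snd h
    have hb0 : m.b (y₁ - y₂) = 0 := by
      have := l''.inc_inj h2
      rw [map_sub, this, sub_self]
    have : y₁ - y₂ ∈ LinearMap.range m.a := by rw [m.hab]; exact hb0
    obtain ⟨c, hc⟩ := this
    have h1 : Φ y₁ = Φ y₂ := congrArg Prod.fst h
    have : l'.inc c = 0 := by
      rw [← hΦa, hc, map_sub, h1, sub_self]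
    have hc0 : c = 0 := l'.inc_inj (by simpa using this)
    have : y₁ - y₂ = 0 := by rw [← hc, hc0, map_zero]
    exact sub_eq_zero.mp this
  -- the new module: the cokernel of u
  set mk : (P' × P'') →ₗ[S] ((P' × P'') ⧸ LinearMap.range u) := (LinearMap.range u).mkQ
    with hmkdef
  -- the map B' → coker u
  have hle1 : LinearMap.ker l'.sur ≤ LinearMap.ker (mk.comp (LinearMap.inl S P' P'')) := by
    intro x hx
    have : x ∈ LinearMap.range l'.inc := by rw [l'.exact]; exact hx
    obtain ⟨c, hc⟩ := this
    have : ((x, 0) : P' × P'') = u (m.a c) := by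
      rw [hu, hΦa, hc]
      have : m.b (m.a c) = 0 := by
        have : m.a c ∈ LinearMap.ker m.b := by rw [← m.hab]; exact ⟨c, rfl⟩
        exact this
      rw [this, map_zero]
    simp only [LinearMap.mem_ker, LinearMap.comp_apply, LinearMap.inl_apply]
    rw [this]
    exact (Submodule.Quotient.mk_eq_zero _).mpr ⟨m.a c, rfl⟩
  have hexna := exists_comp_eq (S := S) l'.sur l'.sur_surj
    (mk.comp (LinearMap.inl S P' P'')) hle1
  set na := hexna.choose with hnadef
  have hna : ∀ x : P', na (l'.sur x) = mk (x, 0) := by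
    intro x
    have := congrArg (fun (f : P' →ₗ[S] _) => f x) hexna.choose_spec
    simpa using this
  have hna_inj : Function.Injective na := by
    rw [injective_iff_map_eq_zero]
    intro z hz
    obtain ⟨x, rfl⟩ := l'.sur_surj z
    rw [hna] at hz
    have : ((x, 0) : P' × P'') ∈ LinearMap.range u :=
      (Submodule.Quotient.mk_eq_zero _).mp hz
    obtain ⟨y, hy⟩ := this
    have h2 : l''.inc (m.b y) = 0 := by
      have := congrArg Prod.snd hy
      simpa [hu] using this
    have hb0 : m.b y = 0 := l''.inc_inj (by simpa using h2)
    have : y ∈ LinearMap.range m.a := by rw [m.hab]; exact hb0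
    obtain ⟨c, hc⟩ := this
    have h1 : Φ y = x := by
      have := congrArg Prod.fst hy
      simpa [hu] using this
    have : x ∈ LinearMap.ker l'.sur := by
      rw [← l'.exact]
      exact ⟨c, by rw [← h1, ← hc, hΦa]⟩
    exact this
  -- the map coker u → B''
  have hle2 : LinearMap.range u ≤ LinearMap.ker (l''.sur.comp (LinearMap.snd S P' P'')) := by
    rintro _ ⟨y, rfl⟩
    simp only [LinearMap.mem_ker, LinearMap.comp_apply, hu, LinearMap.snd_apply]
    have : l''.inc (m.b y) ∈ LinearMap.ker l''.sur := by rw [← l''.exact]; exact ⟨_, rfl⟩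
    exact this
  set nb : ((P' × P'') ⧸ LinearMap.range u) →ₗ[S] B'' :=
    Submodule.liftQ _ (l''.sur.comp (LinearMap.snd S P' P'')) hle2 with hnbdef
  have hnb : ∀ x : P' × P'', nb (mk x) = l''.sur x.2 := fun x => rfl
  have hnb_surj : Function.Surjective nb := by
    intro b''
    obtain ⟨w, hw⟩ := l''.sur_surj b''
    exact ⟨mk (0, w), by rw [hnb, hw]⟩
  have hnab : LinearMap.range na = LinearMap.ker nb := by
    apply le_antisymm
    · rintro _ ⟨z, rfl⟩
      obtain ⟨x, rfl⟩ := l'.sur_surj z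
      rw [LinearMap.mem_ker, hna, hnb]
      simp
    · intro q hq
      obtain ⟨⟨x₁, x₂⟩, rfl⟩ : ∃ x, mk x = q := (LinearMap.range u).mkQ_surjective q
      have h2 : l''.sur x₂ = 0 := hq
      have : x₂ ∈ LinearMap.range l''.inc := by rw [l''.exact]; exact h2
      obtain ⟨c'', hc''⟩ := this
      obtain ⟨y, hy⟩ := m.hb c''
      have key : mk (x₁, x₂) = mk (x₁ - Φ y, 0) := by
        rw [← sub_eq_zero, ← map_sub]
        have hmem : ((x₁, x₂) - (x₁ - Φ y, 0) : P' × P'') ∈ LinearMap.range u :=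
          ⟨y, by rw [hu, hy, hc'']; apply Prod.ext <;> simp⟩
        simpa [hmkdef, Submodule.Quotient.mk_eq_zero] using hmem
      rw [key, ← hna]
      exact ⟨_, rfl⟩
  refine ⟨⟨(P' × P'') ⧸ LinearMap.range u, na, nb, hna_inj, hnb_surj, hnab⟩,
    { inc := u
      sur := mk
      inc_inj := hu_inj
      sur_surj := (LinearMap.range u).mkQ_surjective
      exact := (Submodule.ker_mkQ _).symm
      ext := ?_ }⟩
  intro Q _ _ hQ φ
  obtain ⟨α, hα⟩ := l'.ext Q hQ (φ.comp m.a)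
  have hαc : ∀ c, α (l'.inc c) = φ (m.a c) := by
    intro c
    have := congrArg (fun (f : A' →ₗ[S] Q) => f c) hα
    simpa using this
  set ψ : m.Y →ₗ[S] Q := φ - α.comp Φ with hψdef
  have hψa : LinearMap.ker m.b ≤ LinearMap.ker ψ := by
    intro y hy
    have : y ∈ LinearMap.range m.a := by rw [m.hab]; exact hy
    obtain ⟨c, rfl⟩ := this
    simp only [LinearMap.mem_ker, hψdef, LinearMap.sub_apply, LinearMap.comp_apply]
    rw [hΦa, hαc, sub_self]
  obtain ⟨βb, hβb⟩ := exists_comp_eq (S := S) m.b m.hb ψ hψa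
  have hβby : ∀ y, βb (m.b y) = ψ y := by
    intro y
    have := congrArg (fun (f : m.Y →ₗ[S] Q) => f y) hβb
    simpa using this
  obtain ⟨β, hβ⟩ := l''.ext Q hQ βb
  have hβc : ∀ c, β (l''.inc c) = βb c := by
    intro c
    have := congrArg (fun (f : A'' →ₗ[S] Q) => f c) hβ
    simpa using this
  refine ⟨α.comp (LinearMap.fst S P' P'') + β.comp (LinearMap.snd S P' P''), ?_⟩
  ext y
  simp only [LinearMap.comp_apply, LinearMap.add_apply, hu, LinearMap.fst_apply,
    LinearMap.snd_apply]
  rw [hβc, hβby]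
  simp [hψdef]

end Steps2
end GPAux

namespace GPAux
section Closure
variable {S : Type u} [Ring S]
variable {X' X X'' : Type u} [AddCommGroup X'] [Module S X'] [AddCommGroup X] [Module S X]
  [AddCommGroup X''] [Module S X'']

variable (ι : X' →ₗ[S] X) (p : X →ₗ[S] X'') (hι : Function.Injective ι)
  (hp : Function.Surjective p) (hexact : LinearMap.range ι = LinearMap.ker p)

/-- The initial SES, rewritten with the identifications of the two resolutions. -/
noncomputable def initMid {Z0' Z0'' : Type u} [AddCommGroup Z0'] [Module S Z0']
    [AddCommGroup Z0''] [Module S Z0''] (e' : X' ≃ₗ[S] Z0') (e'' : X'' ≃ₗ[S] Z0'') :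
    MidSES S Z0' Z0'' where
  Y := X
  a := ι.comp e'.symm.toLinearMap
  b := e''.toLinearMap.comp p
  ha := hι.comp e'.symm.injective
  hb := e''.surjective.comp hp
  hab := by
    rw [LinearMap.range_comp, LinearEquiv.range, Submodule.map_top, hexact,
      LinearMap.ker_comp, LinearEquiv.ker, Submodule.comap_bot]

variable (L' : LeftRes S X') (L'' : LeftRes S X'')

/-- The chain of middle SESs going left. -/
noncomputable def leftChain : ∀ j, MidSES S (L'.Z j) (L''.Z j) := fun j =>
  Nat.rec (initMid ι p hι hp hexact L'.e L''.e)
    (fun j m => (leftStep m (L'.link j) (L''.link j) (L''.projR j)).1) j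

/-- The left resolution of the middle of an extension. -/
noncomputable def leftExt : LeftRes S X where
  Z := fun j => (leftChain ι p hι hp hexact L' L'' j).Y
  R := fun j => L'.R j × L''.R j
  projR := fun j => by
    haveI := L'.projR j
    haveI := L''.projR j
    exact inferInstance
  e := LinearEquiv.refl S X
  link := fun j =>
    (leftStep (leftChain ι p hι hp hexact L' L'' j) (L'.link j) (L''.link j) (L''.projR j)).2

/-- `Ext¹(C'' i, proj) = 0` for all cosyzygies of `X''`. -/
theorem coextC (L'' : LeftRes S X'') (R'' : RightRes S X'') :
    ∀ i, CoExt (S := S) (R''.C i) := by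
  intro i
  cases i with
  | zero =>
    exact ⟨L''.Z 1, L''.R 0, inferInstance, inferInstance, inferInstance, inferInstance,
      L''.projR 0, ⟨(L''.link 0).congA (L''.e.symm ≪≫ₗ R''.e)⟩⟩
  | succ i =>
    exact ⟨R''.C i, R''.Q i, inferInstance, inferInstance, inferInstance, inferInstance,
      R''.projQ i, ⟨R''.link i⟩⟩

variable (R' : RightRes S X') (R'' : RightRes S X'')

/-- The chain of middle SESs going right. -/
noncomputable def rightChain : ∀ i, MidSES S (R'.C i) (R''.C i) := fun i =>
  Nat.rec (initMid ι p hι hp hexact R'.e R''.e)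
    (fun i m => (rightStep m (R'.link i) (R''.link i) (R'.projQ i) (coextC L'' R'' i)).1) i

/-- The right resolution of the middle of an extension. -/
noncomputable def rightExt : RightRes S X where
  C := fun i => (rightChain ι p hι hp hexact L'' R' R'' i).Y
  Q := fun i => R'.Q i × R''.Q i
  projQ := fun i => by
    haveI := R'.projQ i
    haveI := R''.projQ i
    exact inferInstance
  e := LinearEquiv.refl S X
  link := fun i =>
    (rightStep (rightChain ι p hι hp hexact L'' R' R'' i) (R'.link i) (R''.link i)
      (R'.projQ i) (coextC L'' R'' i)).2

/-- **Extension closure**: the middle of an extension of modules with `GPData` has `GPData`. -/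
noncomputable def GPData.ofExtension (D' : GPData S X') (D'' : GPData S X'') : GPData S X :=
  ⟨leftExt ι p hι hp hexact D'.left D''.left,
   rightExt ι p hι hp hexact D''.left D'.right D''.right⟩

end Closure
end GPAux

namespace GPAux
section Assemble
variable {S : Type u} [Ring S]

theorem range_comp_surj {A B C : Type u} [AddCommGroup A] [Module S A] [AddCommGroup B]
    [Module S B] [AddCommGroup C] [Module S C] (g : B →ₗ[S] C) (f : A →ₗ[S] B)
    (hf : Function.Surjective f) : LinearMap.range (g.comp f) = LinearMap.range g := by
  rw [LinearMap.range_comp, LinearMap.range_eq_top.2 hf, Submodule.map_top]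

theorem ker_comp_inj {A B C : Type u} [AddCommGroup A] [Module S A] [AddCommGroup B]
    [Module S B] [AddCommGroup C] [Module S C] (g : B →ₗ[S] C) (f : A →ₗ[S] B)
    (hg : Function.Injective g) : LinearMap.ker (g.comp f) = LinearMap.ker f := by
  rw [LinearMap.ker_comp, LinearMap.ker_eq_bot.2 hg, Submodule.comap_bot]

theorem homstep {P1 B P2 Q : Type u} [AddCommGroup P1] [Module S P1] [AddCommGroup B]
    [Module S B] [AddCommGroup P2] [Module S P2] [AddCommGroup Q] [Module S Q]
    (r : P1 →ₗ[S] B) (hr : Function.Surjective r) (inc : B →ₗ[S] P2)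
    (hext : ∀ φ : B →ₗ[S] Q, ∃ ψ : P2 →ₗ[S] Q, ψ.comp inc = φ)
    (f : P1 →ₗ[S] Q) (hf : LinearMap.ker r ≤ LinearMap.ker f) :
    ∃ g : P2 →ₗ[S] Q, g.comp (inc.comp r) = f := by
  obtain ⟨φ, hφ⟩ := exists_comp_eq (S := S) r hr f hf
  obtain ⟨ψ, hψ⟩ := hext φ
  refine ⟨ψ, ?_⟩
  rw [← LinearMap.comp_assoc, hψ, hφ]

variable {X : Type u} [AddCommGroup X] [Module S X]
variable (L : LeftRes S X) (Rt : RightRes S X)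

/-- The underlying family of the assembled complete resolution. -/
def PP : ℤ → Type u
  | .ofNat 0 => L.R 0
  | .ofNat (n + 1) => Rt.Q n
  | .negSucc n => L.R (n + 1)

noncomputable instance PPacg : ∀ i, AddCommGroup (PP L Rt i)
  | .ofNat 0 => inferInstanceAs (AddCommGroup (L.R 0))
  | .ofNat (n + 1) => inferInstanceAs (AddCommGroup (Rt.Q n))
  | .negSucc n => inferInstanceAs (AddCommGroup (L.R (n + 1)))

noncomputable instance PPmod : ∀ i, Module S (PP L Rt i)
  | .ofNat 0 => inferInstanceAs (Module S (L.R 0))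
  | .ofNat (n + 1) => inferInstanceAs (Module S (Rt.Q n))
  | .negSucc n => inferInstanceAs (Module S (L.R (n + 1)))

theorem PPproj : ∀ i, Module.Projective S (PP L Rt i)
  | .ofNat 0 => L.projR 0
  | .ofNat (n + 1) => Rt.projQ n
  | .negSucc n => L.projR (n + 1)

/-- The middle connecting map `R 0 → C 0`. -/
noncomputable def midmap : L.R 0 →ₗ[S] Rt.C 0 :=
  (Rt.e.toLinearMap.comp L.e.symm.toLinearMap).comp (L.link 0).sur

theorem midmap_surj : Function.Surjective (midmap L Rt) :=
  (Rt.e.surjective.comp L.e.symm.surjective).comp (L.link 0).sur_surj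

theorem ker_midmap : LinearMap.ker (midmap L Rt) = LinearMap.ker (L.link 0).sur := by
  unfold midmap
  rw [ker_comp_inj]
  exact Rt.e.injective.comp L.e.symm.injective

/-- The differentials of the assembled complete resolution. -/
noncomputable def dd : ∀ i : ℤ, PP L Rt i →ₗ[S] PP L Rt (i + 1)
  | .ofNat 0 => (Rt.link 0).inc.comp (midmap L Rt)
  | .ofNat (n + 1) => (Rt.link (n + 1)).inc.comp (Rt.link n).sur
  | .negSucc 0 => (L.link 0).inc.comp ((L.link 1).sur)
  | .negSucc (n + 1) => (L.link (n + 1)).inc.comp ((L.link (n + 2)).sur)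

theorem dd_exact : ∀ i : ℤ, LinearMap.range (dd L Rt i) = LinearMap.ker (dd L Rt (i + 1)) := by
  intro i
  match i with
  | .ofNat 0 =>
    show LinearMap.range ((Rt.link 0).inc.comp (midmap L Rt)) =
      LinearMap.ker ((Rt.link 1).inc.comp (Rt.link 0).sur)
    rw [range_comp_surj _ _ (midmap_surj L Rt), ker_comp_inj _ _ (Rt.link 1).inc_inj,
      (Rt.link 0).exact]
  | .ofNat (n + 1) =>
    show LinearMap.range ((Rt.link (n + 1)).inc.comp (Rt.link n).sur) =
      LinearMap.ker ((Rt.link (n + 2)).inc.comp (Rt.link (n + 1)).sur)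
    rw [range_comp_surj _ _ (Rt.link n).sur_surj, ker_comp_inj _ _ (Rt.link (n + 2)).inc_inj,
      (Rt.link (n + 1)).exact]
  | .negSucc 0 =>
    show LinearMap.range ((L.link 0).inc.comp (L.link 1).sur) =
      LinearMap.ker ((Rt.link 0).inc.comp (midmap L Rt))
    rw [range_comp_surj _ _ (L.link 1).sur_surj, ker_comp_inj _ _ (Rt.link 0).inc_inj,
      ker_midmap, (L.link 0).exact]
  | .negSucc (n + 1) =>
    match n with
    | 0 =>
      show LinearMap.range ((L.link 1).inc.comp (L.link 2).sur) =
        LinearMap.ker ((L.link 0).inc.comp (L.link 1).sur)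
      rw [range_comp_surj _ _ (L.link 2).sur_surj, ker_comp_inj _ _ (L.link 0).inc_inj,
        (L.link 1).exact]
    | m + 1 =>
      show LinearMap.range ((L.link (m + 2)).inc.comp (L.link (m + 3)).sur) =
        LinearMap.ker ((L.link (m + 1)).inc.comp (L.link (m + 2)).sur)
      rw [range_comp_surj _ _ (L.link (m + 3)).sur_surj, ker_comp_inj _ _ (L.link (m + 1)).inc_inj,
        (L.link (m + 2)).exact]

theorem dd_homExact : ∀ (Q : Type u) [AddCommGroup Q] [Module S Q], Module.Projective S Q →
    ∀ i (f : PP L Rt (i + 1) →ₗ[S] Q), f.comp (dd L Rt i) = 0 →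
      ∃ g : PP L Rt (i + 1 + 1) →ₗ[S] Q, g.comp (dd L Rt (i + 1)) = f := by
  intro Q _ _ hQ i f hf
  have hker : ∀ {B P1 : Type u} {_ : AddCommGroup B} {_ : Module S B} {_ : AddCommGroup P1}
      {_ : Module S P1} (inc : B →ₗ[S] (PP L Rt (i+1))) (m : P1 →ₗ[S] B),
      Function.Surjective m → f.comp (inc.comp m) = 0 → LinearMap.range inc ≤ LinearMap.ker f := by
    intro B P1 _ _ _ _ inc m hm h0
    rintro _ ⟨b, rfl⟩
    obtain ⟨x, rfl⟩ := hm b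
    have := congrArg (fun (t : P1 →ₗ[S] Q) => t x) h0
    simpa using this
  match i with
  | .ofNat 0 =>
    have hle : LinearMap.ker (Rt.link 0).sur ≤ LinearMap.ker f := by
      rw [← (Rt.link 0).exact]
      exact hker (Rt.link 0).inc (midmap L Rt) (midmap_surj L Rt) hf
    exact homstep (Rt.link 0).sur (Rt.link 0).sur_surj (Rt.link 1).inc
      (fun φ => (Rt.link 1).ext Q hQ φ) f hle
  | .ofNat (n + 1) =>
    have hle : LinearMap.ker (Rt.link (n + 1)).sur ≤ LinearMap.ker f := by
      rw [← (Rt.link (n + 1)).exact]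
      exact hker (Rt.link (n + 1)).inc (Rt.link n).sur (Rt.link n).sur_surj hf
    exact homstep (Rt.link (n + 1)).sur (Rt.link (n + 1)).sur_surj (Rt.link (n + 2)).inc
      (fun φ => (Rt.link (n + 2)).ext Q hQ φ) f hle
  | .negSucc 0 =>
    have hle : LinearMap.ker (midmap L Rt) ≤ LinearMap.ker f := by
      rw [ker_midmap, ← (L.link 0).exact]
      exact hker (L.link 0).inc (L.link 1).sur (L.link 1).sur_surj hf
    exact homstep (midmap L Rt) (midmap_surj L Rt) (Rt.link 0).inc
      (fun φ => (Rt.link 0).ext Q hQ φ) f hle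
  | .negSucc 1 =>
    have hle : LinearMap.ker (L.link 1).sur ≤ LinearMap.ker f := by
      rw [← (L.link 1).exact]
      exact hker (L.link 1).inc (L.link 2).sur (L.link 2).sur_surj hf
    exact homstep (L.link 1).sur (L.link 1).sur_surj (L.link 0).inc
      (fun φ => (L.link 0).ext Q hQ φ) f hle
  | .negSucc (n + 2) =>
    have hle : LinearMap.ker (L.link (n + 2)).sur ≤ LinearMap.ker f := by
      rw [← (L.link (n + 2)).exact]
      exact hker (L.link (n + 2)).inc (L.link (n + 3)).sur (L.link (n + 3)).sur_surj hf
    exact homstep (L.link (n + 2)).sur (L.link (n + 2)).sur_surj (L.link (n + 1)).inc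
      (fun φ => (L.link (n + 1)).ext Q hQ φ) f hle

/-- Assemble a complete projective resolution from `GPData`. -/
noncomputable def GPData.toCPR (D : GPData S X) : CompleteProjectiveResolution S X where
  P := PP D.left D.right
  projective := PPproj D.left D.right
  d := dd D.left D.right
  exact := dd_exact D.left D.right
  homExact := dd_homExact D.left D.right
  equiv := by
    have h : LinearMap.range ((D.right.link 0).inc.comp (midmap D.left D.right)) =
        LinearMap.range (D.right.link 0).inc :=
      range_comp_surj _ _ (midmap_surj D.left D.right)
    exact ⟨D.right.e ≪≫ₗ LinearEquiv.ofInjective (D.right.link 0).inc (D.right.link 0).inc_inj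
      ≪≫ₗ LinearEquiv.ofEq _ _ h.symm⟩

theorem GPData.isGP (D : GPData S X) : IsGorensteinProjective S X := ⟨D.toCPR⟩

end Assemble
end GPAux


/-- Given an exact sequence `0 → A → G₁ → G₀ → M → 0` of left `R`-modules
with `G₀` and `G₁` Gorenstein projective, there exists an exact sequence
`0 → A → H → Q → M → 0` with `Q` projective and `H` Gorenstein projective. -/
theorem exists_exact_four_term_gorenstein_projective
    (R : Type u) [Ring R]
    (A G₁ G₀ M : Type u) [AddCommGroup A] [Module R A] [AddCommGroup G₁] [Module R G₁]
    [AddCommGroup G₀] [Module R G₀] [AddCommGroup M] [Module R M]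
    (f : A →ₗ[R] G₁) (g : G₁ →ₗ[R] G₀) (h : G₀ →ₗ[R] M)
    (hf : Function.Injective f) (hh : Function.Surjective h)
    (hfg : LinearMap.range f = LinearMap.ker g)
    (hgh : LinearMap.range g = LinearMap.ker h)
    (hG₁ : IsGorensteinProjective R G₁) (hG₀ : IsGorensteinProjective R G₀) :
    ∃ (H Q : Type u) (_ : AddCommGroup H) (_ : Module R H) (_ : AddCommGroup Q) (_ : Module R Q),
      IsGorensteinProjective R H ∧ Module.Projective R Q ∧
      ∃ (a : A →ₗ[R] H) (b : H →ₗ[R] Q) (c : Q →ₗ[R] M),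
        Function.Injective a ∧ Function.Surjective c ∧
        LinearMap.range a = LinearMap.ker b ∧ LinearMap.range b = LinearMap.ker c := by
  classical
  obtain ⟨res₀⟩ := hG₀
  obtain ⟨res₁⟩ := hG₁
  obtain ⟨e₀⟩ := res₀.equiv
  obtain ⟨e₁⟩ := res₁.equiv
  -- left resolution of G₀
  set L₀ : GPAux.LeftRes R G₀ := (res₀.leftResAt 0).congr e₀.symm with hL₀
  set π : L₀.R 0 →ₗ[R] G₀ := L₀.e.symm.toLinearMap.comp (L₀.link 0).sur with hπ
  have hπs : Function.Surjective π := L₀.e.symm.surjective.comp (L₀.link 0).sur_surj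
  have hkerπ : LinearMap.ker π = LinearMap.range (L₀.link 0).inc := by
    rw [hπ, GPAux.ker_comp_inj _ _ L₀.e.symm.injective, (L₀.link 0).exact]
  -- the pullback module H
  set Δ : (G₁ × L₀.R 0) →ₗ[R] G₀ :=
    g.comp (LinearMap.fst R G₁ (L₀.R 0)) - π.comp (LinearMap.snd R G₁ (L₀.R 0)) with hΔ
  have hΔap : ∀ x : G₁ × L₀.R 0, Δ x = g x.1 - π x.2 := fun x => rfl
  set H := LinearMap.ker Δ with hH
  -- SES Z1 → H → G₁
  have hja_mem : ∀ z : L₀.Z 1, ((0, (L₀.link 0).inc z) : G₁ × L₀.R 0) ∈ H := by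
    intro z
    have : π ((L₀.link 0).inc z) = 0 := by
      have : (L₀.link 0).inc z ∈ LinearMap.ker π := by rw [hkerπ]; exact ⟨z, rfl⟩
      exact this
    simp [hH, LinearMap.mem_ker, hΔap, this]
  set ja : L₀.Z 1 →ₗ[R] H :=
    LinearMap.codRestrict _ (LinearMap.prod 0 (L₀.link 0).inc) hja_mem with hjadef
  have hja : ∀ z, ((ja z : G₁ × L₀.R 0)) = (0, (L₀.link 0).inc z) := fun z => rfl
  set pb : H →ₗ[R] G₁ := (LinearMap.fst R G₁ (L₀.R 0)).comp H.subtype with hpbdef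
  have hja_inj : Function.Injective ja := by
    intro z₁ z₂ hz
    have := congrArg (fun x : H => (x : G₁ × L₀.R 0).2) hz
    exact (L₀.link 0).inc_inj this
  have hpb_surj : Function.Surjective pb := by
    intro x
    obtain ⟨q, hq⟩ := hπs (g x)
    exact ⟨⟨(x, q), by simp [hH, LinearMap.mem_ker, hΔap, hq]⟩, rfl⟩
  have hjapb : LinearMap.range ja = LinearMap.ker pb := by
    apply le_antisymm
    · rintro _ ⟨z, rfl⟩
      show pb (ja z) = 0
      rw [hpbdef]
      simp [hja z]
    · rintro ⟨⟨x, q⟩, hxq⟩ hx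
      have hx0 : x = 0 := hx
      have : π q = 0 := by
        have := (LinearMap.mem_ker.1 hxq)
        rw [hΔap] at this
        simp only [hx0, map_zero] at this
        simpa [zero_sub, neg_eq_zero] using this
      have : q ∈ LinearMap.range (L₀.link 0).inc := by rw [← hkerπ]; exact this
      obtain ⟨z, hz⟩ := this
      refine ⟨z, ?_⟩
      apply Subtype.ext
      rw [hja]
      exact Prod.ext hx0.symm hz
  -- Gorenstein projective data
  have D1 : GPAux.GPData R (L₀.Z 1) := res₀.gpDataAt ((0 : ℤ) - 1)
  have DG₁ : GPAux.GPData R G₁ := (res₁.gpDataAt 0).congr e₁.symm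
  have DH : GPAux.GPData R H := GPAux.GPData.ofExtension ja pb hja_inj hpb_surj hjapb D1 DG₁
  -- conclude
  refine ⟨H, L₀.R 0, inferInstance, inferInstance, inferInstance, inferInstance,
    DH.isGP, L₀.projR 0, ?_⟩
  have haf_mem : ∀ x : A, ((f x, 0) : G₁ × L₀.R 0) ∈ H := by
    intro x
    have : g (f x) = 0 := by
      have : f x ∈ LinearMap.ker g := by rw [← hfg]; exact ⟨x, rfl⟩
      exact this
    simp [hH, LinearMap.mem_ker, hΔap, this]
  refine ⟨LinearMap.codRestrict _ (LinearMap.prod f 0) haf_mem,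
    (LinearMap.snd R G₁ (L₀.R 0)).comp H.subtype, h.comp π, ?_, ?_, ?_, ?_⟩
  · intro x₁ x₂ hx
    have := congrArg (fun y : H => (y : G₁ × L₀.R 0).1) hx
    exact hf this
  · exact hh.comp hπs
  · apply le_antisymm
    · rintro _ ⟨x, rfl⟩
      show ((⟨(f x, 0), haf_mem x⟩ : H) : G₁ × L₀.R 0).2 = 0
      rfl
    · rintro ⟨⟨x, q⟩, hxq⟩ hq
      have hq0 : q = 0 := hq
      have : g x = 0 := by
        have := (LinearMap.mem_ker.1 hxq)
        rw [hΔap] at this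
        simpa [hq0] using this
      have : x ∈ LinearMap.range f := by rw [hfg]; exact this
      obtain ⟨x', hx'⟩ := this
      refine ⟨x', ?_⟩
      apply Subtype.ext
      exact Prod.ext hx' hq0.symm
  · apply le_antisymm
    · rintro _ ⟨⟨⟨x, q⟩, hxq⟩, rfl⟩
      show h (π q) = 0
      have := (LinearMap.mem_ker.1 hxq)
      rw [hΔap] at this
      have hπq : π q = g x := (sub_eq_zero.mp this).symm
      have : π q ∈ LinearMap.ker h := by rw [← hgh, hπq]; exact ⟨x, rfl⟩
      simpa using this
    · intro q hq
      have : π q ∈ LinearMap.range g := by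
        rw [hgh]
        exact hq
      obtain ⟨x, hx⟩ := this
      exact ⟨⟨(x, q), by simp [hH, LinearMap.mem_ker, hΔap, hx]⟩, rfl⟩
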